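/- Every well-founded play-measure (one whose support contains no infinite strictly increasing chain of plays) is victorious: for every partial counterstrategy ρ, inf_m P^m_ρ(σ) = 0. -/

import Mathlib

open scoped ENNReal Classical

/-- Active-ending plays over signature `(K, ar)`: alternating sequences of
outputs `k : K` and inputs `i : ar k`. -/
inductive APlay (K : Type) (ar : K → Type) : Type
  | nil : APlay K ar
  | cons (k : K) (i : ar k) (s : APlay K ar) : APlay K ar

variable {K : Type} {ar : K → Type}

/-- Append an output-input pair at the end of an active-ending play. -/
def APlay.snoc : APlay K ar → (k : K) → ar k → APlay K ar
  | .nil, k, i => .cons k i .nil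
  | .cons l j s, k, i => .cons l j (s.snoc k i)

/-- The number of output-input cycles in an active-ending play. -/
def APlay.len : APlay K ar → ℕ
  | .nil => 0
  | .cons _ _ s => s.len + 1

/-- A play-measure: values in `[0,1]` on passive-ending plays (an active play
followed by an output), with `σ_act t = ∑_k σ_pass (t.k)` and
`σ_act (s.k.i) = σ_pass (s.k)`. -/
structure PlayMeasure (K : Type) (ar : K → Type) where
  pass : APlay K ar → K → ℝ≥0∞
  le_one : ∀ t, (∑' k, pass t k) ≤ 1
  consistent : ∀ s k (i : ar k), pass s k = ∑' l, pass (s.snoc k i) l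

/-- The value of a play-measure on an active-ending play. -/
noncomputable def PlayMeasure.act (σ : PlayMeasure K ar) (t : APlay K ar) : ℝ≥0∞ :=
  ∑' k, σ.pass t k

/-- The weight of a play-measure. -/
noncomputable def PlayMeasure.weight (σ : PlayMeasure K ar) : ℝ≥0∞ := σ.act .nil

/-- A partial counterstrategy, given by its set of active-ending plays. -/
structure Counterstrategy (K : Type) (ar : K → Type) where
  act : Set (APlay K ar)
  nil_mem : APlay.nil ∈ act
  prefix_closed : ∀ (s : APlay K ar) (k : K) (i : ar k), s.snoc k i ∈ act → s ∈ act
  deterministic : ∀ (s : APlay K ar) (k : K) (i j : ar k),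
      s.snoc k i ∈ act → s.snoc k j ∈ act → i = j

/-- The passive-ending play `s.k` is a `ρ`-failure: it is in `ρ_pass`
and has no prescribed input. -/
def Counterstrategy.Fails (ρ : Counterstrategy K ar) (s : APlay K ar) (k : K) : Prop :=
  s ∈ ρ.act ∧ ∀ i : ar k, s.snoc k i ∉ ρ.act

/-- `P^m_ρ(σ)`: the sum of `σ_act` over the length-`m` plays in `ρ_act`. -/
noncomputable def contProb (ρ : Counterstrategy K ar) (σ : PlayMeasure K ar) (m : ℕ) : ℝ≥0∞ :=
  ∑' s : {s : APlay K ar // s ∈ ρ.act ∧ s.len = m}, σ.act s.1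

/-- The sum of `σ_pass` over the `ρ`-failures of length `m`. -/
noncomputable def failProb (ρ : Counterstrategy K ar) (σ : PlayMeasure K ar) (m : ℕ) : ℝ≥0∞ :=
  ∑' p : {p : APlay K ar × K // ρ.Fails p.1 p.2 ∧ p.1.len = m}, σ.pass p.1.1 p.1.2

/-- A play-measure is victorious when against every partial counterstrategy,
the probability of play continuing forever is zero. -/
def Victorious (σ : PlayMeasure K ar) : Prop :=
  ∀ ρ : Counterstrategy K ar, (⨅ m, contProb ρ σ m) = 0

/-- The length-`n` prefix of an infinite play. -/
def prefixPlay (f : ℕ → Σ k : K, ar k) : ℕ → APlay K ar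
  | 0 => .nil
  | n + 1 => (prefixPlay f n).snoc (f n).1 (f n).2

/-- A play-measure is well-founded when no infinite play has all its
prefixes in the support. -/
def PlayMeasure.WellFoundedPM (σ : PlayMeasure K ar) : Prop :=
  ¬ ∃ f : ℕ → Σ k : K, ar k, ∀ n, 0 < σ.pass (prefixPlay f n) (f n).1

/-- A play-measure is finitely branching when each active-ending play has
finitely many possible next outputs in the support. -/
def PlayMeasure.FinBranch (σ : PlayMeasure K ar) : Prop :=
  ∀ t : APlay K ar, {k : K | 0 < σ.pass t k}.Finite

/-- Finitely founded: well-founded and finitely branching. -/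
def PlayMeasure.FinFounded (σ : PlayMeasure K ar) : Prop :=
  σ.WellFoundedPM ∧ σ.FinBranch

/-- `f` is uniformly below `g`: there is `d > 0` with `f s + d ≤ g s` on
every passive-ending play `s` in the support of `f`. -/
def UBelow (f g : APlay K ar → K → ℝ≥0∞) : Prop :=
  ∃ d : ℝ≥0∞, 0 < d ∧ ∀ s k, 0 < f s k → f s k + d ≤ g s k


namespace VictoryAux

variable {K : Type} {ar : K → Type}

/-- The continuation value after `m` further steps below `t`, all within `ρ`. -/
noncomputable def Q (ρ : Counterstrategy K ar) (σ : PlayMeasure K ar) :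
    ℕ → APlay K ar → ℝ≥0∞
  | 0, t => σ.act t
  | m + 1, t => ∑' p : {p : Σ k : K, ar k // t.snoc p.1 p.2 ∈ ρ.act},
      Q ρ σ m (t.snoc p.1.1 p.1.2)

lemma child_fst_injective (ρ : Counterstrategy K ar) (t : APlay K ar) :
    Function.Injective
      (fun p : {p : Σ k : K, ar k // t.snoc p.1 p.2 ∈ ρ.act} => p.1.1) := by
  rintro ⟨⟨k, i⟩, hi⟩ ⟨⟨k', j⟩, hj⟩ hkk
  simp only at hkk
  subst hkk
  have := ρ.deterministic t k i j hi hj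
  subst this
  rfl

lemma sumChild_le (ρ : Counterstrategy K ar) (σ : PlayMeasure K ar) (t : APlay K ar) :
    (∑' p : {p : Σ k : K, ar k // t.snoc p.1 p.2 ∈ ρ.act}, σ.act (t.snoc p.1.1 p.1.2))
      ≤ σ.act t := by
  have h1 : ∀ p : {p : Σ k : K, ar k // t.snoc p.1 p.2 ∈ ρ.act},
      σ.act (t.snoc p.1.1 p.1.2) = σ.pass t p.1.1 := by
    rintro ⟨⟨k, i⟩, hp⟩
    exact (σ.consistent t k i).symm
  rw [tsum_congr h1]
  exact ENNReal.tsum_comp_le_tsum_of_injective (child_fst_injective ρ t) (σ.pass t)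

lemma Q_succ_le (ρ : Counterstrategy K ar) (σ : PlayMeasure K ar) :
    ∀ (m : ℕ) (t : APlay K ar), Q ρ σ (m + 1) t ≤ Q ρ σ m t := by
  intro m
  induction m with
  | zero => intro t; simpa [Q] using sumChild_le ρ σ t
  | succ m ih =>
      intro t
      simp only [Q]
      exact ENNReal.tsum_le_tsum fun p => ih _

lemma Q_le_act (ρ : Counterstrategy K ar) (σ : PlayMeasure K ar) :
    ∀ (m : ℕ) (t : APlay K ar), Q ρ σ m t ≤ σ.act t := by
  intro m
  induction m with
  | zero => intro t; exact le_rfl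
  | succ m ih => intro t; exact (Q_succ_le ρ σ m t).trans (ih t)

/-- The limiting continuation value below `t`. -/
noncomputable def qv (ρ : Counterstrategy K ar) (σ : PlayMeasure K ar)
    (t : APlay K ar) : ℝ≥0∞ :=
  ⨅ m, Q ρ σ m t

lemma qv_eq_tsum (ρ : Counterstrategy K ar) (σ : PlayMeasure K ar) (t : APlay K ar) :
    qv ρ σ t = ∑' p : {p : Σ k : K, ar k // t.snoc p.1 p.2 ∈ ρ.act},
      qv ρ σ (t.snoc p.1.1 p.1.2) := by
  classical
  letI : MeasurableSpace {p : Σ k : K, ar k // t.snoc p.1 p.2 ∈ ρ.act} := ⊤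
  haveI : MeasurableSingletonClass {p : Σ k : K, ar k // t.snoc p.1 p.2 ∈ ρ.act} :=
    ⟨fun _ => trivial⟩
  have h1 : qv ρ σ t = ⨅ m, Q ρ σ (m + 1) t := by
    refine le_antisymm (le_iInf fun m => iInf_le _ (m + 1))
      (le_iInf fun m => (iInf_le _ m).trans (Q_succ_le ρ σ m t))
  set g : ℕ → {p : Σ k : K, ar k // t.snoc p.1 p.2 ∈ ρ.act} → ℝ≥0∞ :=
    fun m p => Q ρ σ m (t.snoc p.1.1 p.1.2) with hg
  have hmeas : ∀ m, Measurable (g m) := fun _ => measurable_from_top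
  have hanti : Antitone g := antitone_nat_of_succ_le fun m p => Q_succ_le ρ σ m _
  have hfin : (∫⁻ p, g 0 p ∂MeasureTheory.Measure.count) ≠ ∞ := by
    rw [MeasureTheory.lintegral_count]
    have : (∑' p : {p : Σ k : K, ar k // t.snoc p.1 p.2 ∈ ρ.act}, g 0 p) ≤ 1 :=
      (sumChild_le ρ σ t).trans (σ.le_one t)
    exact ne_top_of_le_ne_top ENNReal.one_ne_top this
  calc qv ρ σ t = ⨅ m, ∑' p, g m p := by
        rw [h1]; exact iInf_congr fun m => by simp only [Q, hg]
    _ = ⨅ m, ∫⁻ p, g m p ∂MeasureTheory.Measure.count := by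
        exact iInf_congr fun m => (MeasureTheory.lintegral_count (g m)).symm
    _ = ∫⁻ p, ⨅ m, g m p ∂MeasureTheory.Measure.count :=
        (MeasureTheory.lintegral_iInf hmeas hanti hfin).symm
    _ = ∑' p, ⨅ m, g m p := MeasureTheory.lintegral_count _
    _ = _ := tsum_congr fun p => rfl

lemma qv_step (ρ : Counterstrategy K ar) (σ : PlayMeasure K ar) (t : APlay K ar)
    (ht : qv ρ σ t ≠ 0) :
    ∃ p : {p : Σ k : K, ar k // t.snoc p.1 p.2 ∈ ρ.act},
      qv ρ σ (t.snoc p.1.1 p.1.2) ≠ 0 := by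
  by_contra hno
  push_neg at hno
  apply ht
  rw [qv_eq_tsum]
  exact ENNReal.tsum_eq_zero.mpr hno

/-- Shifting a counterstrategy past the initial pair `(k, i)`. -/
def shiftC (ρ : Counterstrategy K ar) (k : K) (i : ar k)
    (h : APlay.cons k i .nil ∈ ρ.act) : Counterstrategy K ar where
  act := {s | APlay.cons k i s ∈ ρ.act}
  nil_mem := h
  prefix_closed := fun s l j hs => ρ.prefix_closed (.cons k i s) l j hs
  deterministic := fun s l j j' h1 h2 => ρ.deterministic (.cons k i s) l j j' h1 h2

/-- Shifting a play-measure past the initial pair `(k, i)`. -/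
noncomputable def shiftM (σ : PlayMeasure K ar) (k : K) (i : ar k) : PlayMeasure K ar where
  pass s l := σ.pass (.cons k i s) l
  le_one t := σ.le_one (.cons k i t)
  consistent s l j := σ.consistent (.cons k i s) l j

lemma Q_shift (ρ : Counterstrategy K ar) (σ : PlayMeasure K ar) (k : K) (i : ar k)
    (h : APlay.cons k i .nil ∈ ρ.act) :
    ∀ (m : ℕ) (t : APlay K ar),
      Q (shiftC ρ k i h) (shiftM σ k i) m t = Q ρ σ m (.cons k i t) := by
  intro m
  induction m with
  | zero => intro t; rfl
  | succ m ih =>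
      intro t
      simp only [Q]
      exact tsum_congr fun p => ih _

lemma len_snoc (s : APlay K ar) (k : K) (i : ar k) :
    (s.snoc k i).len = s.len + 1 := by
  induction s with
  | nil => rfl
  | cons l j u ih => simp [APlay.snoc, APlay.len, ih]

lemma snoc_cases (s : APlay K ar) :
    s = .nil ∨ ∃ (u : APlay K ar) (k : K) (i : ar k), s = u.snoc k i := by
  induction s with
  | nil => exact Or.inl rfl
  | cons k i u ih =>
      rcases ih with rfl | ⟨v, l, j, rfl⟩
      · exact Or.inr ⟨.nil, k, i, rfl⟩
      · exact Or.inr ⟨.cons k i v, l, j, rfl⟩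

lemma cons_nil_mem (ρ : Counterstrategy K ar) :
    ∀ (n : ℕ) (u : APlay K ar) (k : K) (i : ar k), u.len ≤ n →
      APlay.cons k i u ∈ ρ.act → APlay.cons k i .nil ∈ ρ.act := by
  intro n
  induction n with
  | zero =>
      intro u k i hl hm
      cases u with
      | nil => exact hm
      | cons l j v => simp [APlay.len] at hl
  | succ n ih =>
      intro u k i hl hm
      rcases snoc_cases u with rfl | ⟨v, l, j, rfl⟩
      · exact hm
      · have hv : v.len ≤ n := by
          have := len_snoc v l j
          omega
        refine ih v k i hv ?_
        exact ρ.prefix_closed (.cons k i v) l j hm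

/-- Decomposition of length-`(m+1)` plays in `ρ.act` via their first pair. -/
noncomputable def consEquiv (ρ : Counterstrategy K ar) (m : ℕ) :
    (Σ p : {p : Σ k : K, ar k // APlay.cons p.1 p.2 APlay.nil ∈ ρ.act},
        {s : APlay K ar // APlay.cons p.1.1 p.1.2 s ∈ ρ.act ∧ s.len = m}) ≃
      {s : APlay K ar // s ∈ ρ.act ∧ s.len = m + 1} := by
  refine Equiv.ofBijective
    (fun x => ⟨APlay.cons x.1.1.1 x.1.1.2 x.2.1, x.2.2.1, by
      simp [APlay.len, x.2.2.2]⟩) ⟨?_, ?_⟩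
  · rintro ⟨⟨⟨k, i⟩, hp⟩, ⟨s, hs⟩⟩ ⟨⟨⟨k', i'⟩, hp'⟩, ⟨s', hs'⟩⟩ hx
    simp only [Subtype.mk.injEq, APlay.cons.injEq] at hx
    obtain ⟨h1, h2, h3⟩ := hx
    subst h1
    subst h3
    have h2' := eq_of_heq h2
    subst h2'
    rfl
  · rintro ⟨s, hs, hl⟩
    cases s with
    | nil => simp [APlay.len] at hl
    | cons k i u =>
        have hl' : u.len = m := by
          simpa [APlay.len] using hl
        exact ⟨⟨⟨⟨k, i⟩, cons_nil_mem ρ u.len u k i le_rfl hs⟩, ⟨u, hs, hl'⟩⟩, rfl⟩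

lemma contProb_eq_Q :
    ∀ (m : ℕ) (ρ : Counterstrategy K ar) (σ : PlayMeasure K ar),
      contProb ρ σ m = Q ρ σ m .nil := by
  intro m
  induction m with
  | zero =>
      intro ρ σ
      refine (tsum_eq_single (⟨.nil, ρ.nil_mem, rfl⟩ :
        {s : APlay K ar // s ∈ ρ.act ∧ s.len = 0}) ?_)
      rintro ⟨s, hs, hl⟩ hb
      exfalso
      apply hb
      cases s with
      | nil => rfl
      | cons k i u => simp [APlay.len] at hl
  | succ m ih =>
      intro ρ σ
      have h1 : contProb ρ σ (m + 1)
          = ∑' x : (Σ p : {p : Σ k : K, ar k // APlay.cons p.1 p.2 APlay.nil ∈ ρ.act},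
              {s : APlay K ar // APlay.cons p.1.1 p.1.2 s ∈ ρ.act ∧ s.len = m}),
            σ.act (consEquiv ρ m x).1 :=
        ((consEquiv ρ m).tsum_eq fun s => σ.act s.1).symm
      rw [h1, ENNReal.tsum_sigma']
      simp only [Q]
      refine tsum_congr fun p => ?_
      calc (∑' s : {s : APlay K ar // APlay.cons p.1.1 p.1.2 s ∈ ρ.act ∧ s.len = m},
              σ.act (consEquiv ρ m ⟨p, s⟩).1)
          = contProb (shiftC ρ p.1.1 p.1.2 p.2) (shiftM σ p.1.1 p.1.2) m :=
            tsum_congr fun s => rfl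
        _ = Q (shiftC ρ p.1.1 p.1.2 p.2) (shiftM σ p.1.1 p.1.2) m .nil := ih _ _
        _ = Q ρ σ m (.cons p.1.1 p.1.2 .nil) := Q_shift ρ σ p.1.1 p.1.2 p.2 m .nil

/-- The canonical sequence of plays with positive limiting value. -/
noncomputable def seqF (ρ : Counterstrategy K ar) (σ : PlayMeasure K ar)
    (hstep : ∀ t, qv ρ σ t ≠ 0 → ∃ p : {p : Σ k : K, ar k // t.snoc p.1 p.2 ∈ ρ.act},
      qv ρ σ (t.snoc p.1.1 p.1.2) ≠ 0)
    (h0 : qv ρ σ .nil ≠ 0) : ℕ → {t : APlay K ar // qv ρ σ t ≠ 0}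
  | 0 => ⟨.nil, h0⟩
  | n + 1 =>
      let t := seqF ρ σ hstep h0 n
      ⟨t.1.snoc (hstep t.1 t.2).choose.1.1 (hstep t.1 t.2).choose.1.2,
        (hstep t.1 t.2).choose_spec⟩

end VictoryAux

/-- Every well-founded play-measure is victorious. -/
theorem stmt_9 {K : Type} {ar : K → Type}
    (σ : PlayMeasure K ar) (h : σ.WellFoundedPM) : Victorious σ := by
  classical
  intro ρ
  by_contra h0
  have hq : VictoryAux.qv ρ σ APlay.nil ≠ 0 := by
    have heq : (⨅ m, contProb ρ σ m) = VictoryAux.qv ρ σ APlay.nil :=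
      iInf_congr fun m => VictoryAux.contProb_eq_Q m ρ σ
    rwa [heq] at h0
  have hstep := fun t => VictoryAux.qv_step ρ σ t
  set F := VictoryAux.seqF ρ σ hstep hq with hF
  refine h ⟨fun n => (hstep (F n).1 (F n).2).choose.1, fun n => ?_⟩
  have hpre : ∀ n, prefixPlay (fun n => (hstep (F n).1 (F n).2).choose.1) n = (F n).1 := by
    intro n
    induction n with
    | zero => rfl
    | succ n ih =>
        show (prefixPlay _ n).snoc _ _ = _
        rw [ih]
        rfl
  rw [hpre n]
  set c := (hstep (F n).1 (F n).2).choose with hc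
  have h1 : VictoryAux.qv ρ σ ((F n).1.snoc c.1.1 c.1.2) ≠ 0 :=
    (hstep (F n).1 (F n).2).choose_spec
  have h2 : VictoryAux.qv ρ σ ((F n).1.snoc c.1.1 c.1.2) ≤ σ.pass (F n).1 c.1.1 := by
    refine (iInf_le _ 0).trans_eq ?_
    show σ.act ((F n).1.snoc c.1.1 c.1.2) = _
    exact (σ.consistent (F n).1 c.1.1 c.1.2).symm
  exact lt_of_le_of_ne zero_le fun hz => h1 (le_antisymm (h2.trans_eq hz.symm) zero_le)
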